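/- Let ρ be a state and σ a positive definite matrix on ℂ^d, and let 0 < δ < ε < 1. Then D_H^{ε−δ}(ρ‖σ) + log δ ≤ D̲_s^ε(ρ‖σ) ≤ D_H^ε(ρ‖σ). -/

import Mathlib

open Matrix
open scoped ComplexOrder

noncomputable section

/-- Positive part `C₊` of a Hermitian matrix, obtained by applying `x ↦ max x 0` to the
eigenvalues in a spectral decomposition (junk value `0` for non-Hermitian input). -/
def matPos {n : Type*} [Fintype n] [DecidableEq n] (A : Matrix n n ℂ) : Matrix n n ℂ :=
  if hA : A.IsHermitian then
    (hA.eigenvectorUnitary : Matrix n n ℂ) *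
      Matrix.diagonal (fun i => ((max (hA.eigenvalues i) 0 : ℝ) : ℂ)) *
      star (hA.eigenvectorUnitary : Matrix n n ℂ)
  else 0

/-- `Tr C₊` as a real number. -/
def trPos {n : Type*} [Fintype n] [DecidableEq n] (A : Matrix n n ℂ) : ℝ :=
  (matPos A).trace.re

/-- Spectral projection of a Hermitian matrix onto `[0, ∞)` (junk value `0` for
non-Hermitian input). -/
def projNonneg {n : Type*} [Fintype n] [DecidableEq n] (A : Matrix n n ℂ) : Matrix n n ℂ :=
  if hA : A.IsHermitian then
    (hA.eigenvectorUnitary : Matrix n n ℂ) *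
      Matrix.diagonal (fun i => if 0 ≤ hA.eigenvalues i then (1 : ℂ) else 0) *
      star (hA.eigenvectorUnitary : Matrix n n ℂ)
  else 0

/-- The information spectrum relative entropy `D̲_s^ε(ρ‖σ)`. -/
def Dlow {n : Type*} [Fintype n] [DecidableEq n] (ε : ℝ) (ρ σ : Matrix n n ℂ) : ℝ :=
  sSup {γ : ℝ | 1 - ε ≤ trPos (ρ - (2 : ℝ) ^ γ • σ)}

/-- The information spectrum relative entropy `D̄_s^ε(ρ‖σ)`. -/
def Dhigh {n : Type*} [Fintype n] [DecidableEq n] (ε : ℝ) (ρ σ : Matrix n n ℂ) : ℝ :=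
  sInf {γ : ℝ | trPos (ρ - (2 : ℝ) ^ γ • σ) ≤ ε}

/-- The hypothesis testing relative entropy
`D_H^ε(ρ‖σ) = −log inf{Tr(Qσ) : 0 ≤ Q ≤ 1, Tr(Qρ) ≥ 1 − ε}` (logarithm to base 2). -/
def DH {n : Type*} [Fintype n] [DecidableEq n] (ε : ℝ) (ρ σ : Matrix n n ℂ) : ℝ :=
  - Real.logb 2 (sInf {r : ℝ | ∃ Q : Matrix n n ℂ, Q.PosSemidef ∧
      ((1 : Matrix n n ℂ) - Q).PosSemidef ∧ 1 - ε ≤ (Q * ρ).trace.re ∧ r = (Q * σ).trace.re})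

namespace DlowDHAux

variable {n : Type*} [Fintype n] [DecidableEq n]

lemma trace_mul_diagonal' (M : Matrix n n ℂ) (f : n → ℂ) :
    (M * Matrix.diagonal f).trace = ∑ i, M i i * f i := by
  simp [Matrix.trace, Matrix.diag, Matrix.mul_diagonal]

lemma sUU {A : Matrix n n ℂ} (hA : A.IsHermitian) :
    star (hA.eigenvectorUnitary : Matrix n n ℂ) * (hA.eigenvectorUnitary : Matrix n n ℂ) = 1 :=
  Matrix.UnitaryGroup.star_mul_self _

lemma UsU {A : Matrix n n ℂ} (hA : A.IsHermitian) :
    (hA.eigenvectorUnitary : Matrix n n ℂ) * star (hA.eigenvectorUnitary : Matrix n n ℂ) = 1 :=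
  hA.eigenvectorUnitary.2.2

/-- Trace of `Q * A` via the spectral decomposition of Hermitian `A`. -/
lemma reTrace_mul_eq {A : Matrix n n ℂ} (hA : A.IsHermitian) (Q : Matrix n n ℂ) :
    ((Q * A).trace).re = ∑ i, ((star (hA.eigenvectorUnitary : Matrix n n ℂ) * Q *
      (hA.eigenvectorUnitary : Matrix n n ℂ)) i i).re * hA.eigenvalues i := by
  set U : Matrix n n ℂ := (hA.eigenvectorUnitary : Matrix n n ℂ) with hU
  have h1 : (Q * A).trace = ((star U * Q * U) * Matrix.diagonal
      (RCLike.ofReal ∘ hA.eigenvalues)).trace := by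
    conv_lhs => rw [hA.spectral_theorem, Unitary.conjStarAlgAut_apply]
    rw [← hU, ← mul_assoc, ← mul_assoc, trace_mul_cycle, ← mul_assoc]
  rw [h1, trace_mul_diagonal']
  rw [Complex.re_sum]
  congr 1; ext i
  simp [Complex.mul_re, Function.comp]

/-- Diagonal entries of a PSD matrix have nonnegative real part (indeed they are nonneg reals). -/
lemma diag_re_nonneg {Q : Matrix n n ℂ} (hQ : Q.PosSemidef) (i : n) : 0 ≤ (Q i i).re := by
  have h := hQ.dotProduct_mulVec_nonneg (Pi.single i 1)
  have he : star (Pi.single i 1) ⬝ᵥ Q *ᵥ (Pi.single i 1 : n → ℂ) = Q i i := by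
    rw [Matrix.mulVec_single]
    simp [dotProduct, Pi.single_apply, apply_ite (star : ℂ → ℂ)]
  rw [he] at h
  exact (Complex.le_def.mp h).1

lemma conj_psd {Q : Matrix n n ℂ} (hQ : Q.PosSemidef) {A : Matrix n n ℂ} (hA : A.IsHermitian) :
    (star (hA.eigenvectorUnitary : Matrix n n ℂ) * Q *
      (hA.eigenvectorUnitary : Matrix n n ℂ)).PosSemidef := by
  rw [show star (hA.eigenvectorUnitary : Matrix n n ℂ)
      = (hA.eigenvectorUnitary : Matrix n n ℂ)ᴴ from rfl]
  exact hQ.conjTranspose_mul_mul_same _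

/-- `Re Tr(Qσ) ≥ 0` for `Q`, `σ` PSD. -/
lemma reTrace_mul_nonneg {Q σ : Matrix n n ℂ} (hQ : Q.PosSemidef) (hσ : σ.PosSemidef) :
    0 ≤ ((Q * σ).trace).re := by
  rw [reTrace_mul_eq hσ.1 Q]
  refine Finset.sum_nonneg fun i _ => mul_nonneg (diag_re_nonneg (conj_psd hQ hσ.1) i)
    (hσ.eigenvalues_nonneg i)


lemma trPos_eq_sum {A : Matrix n n ℂ} (hA : A.IsHermitian) :
    trPos A = ∑ i, max (hA.eigenvalues i) 0 := by
  rw [trPos, matPos, dif_pos hA]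
  set U : Matrix n n ℂ := (hA.eigenvectorUnitary : Matrix n n ℂ) with hU
  rw [mul_assoc, trace_mul_comm, mul_assoc, sUU hA, mul_one, trace_diagonal, Complex.re_sum]
  simp

lemma trPos_nonneg {A : Matrix n n ℂ} (hA : A.IsHermitian) : 0 ≤ trPos A := by
  rw [trPos_eq_sum hA]
  exact Finset.sum_nonneg fun i _ => le_max_right _ _

/-- Key upper bound: for `0 ≤ Q ≤ 1`, `Re Tr(QA) ≤ Tr A₊`. -/
lemma reTrace_mul_le_trPos {Q A : Matrix n n ℂ} (hQ : Q.PosSemidef)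
    (hQ1 : ((1 : Matrix n n ℂ) - Q).PosSemidef) (hA : A.IsHermitian) :
    ((Q * A).trace).re ≤ trPos A := by
  rw [reTrace_mul_eq hA Q, trPos_eq_sum hA]
  refine Finset.sum_le_sum fun i _ => ?_
  set U : Matrix n n ℂ := (hA.eigenvectorUnitary : Matrix n n ℂ) with hU
  set M : Matrix n n ℂ := star U * Q * U with hM
  have h0 : 0 ≤ (M i i).re := diag_re_nonneg (conj_psd hQ hA) i
  have h1 : (M i i).re ≤ 1 := by
    have hpsd := conj_psd hQ1 hA
    have hexp : star U * ((1 : Matrix n n ℂ) - Q) * U = 1 - M := by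
      rw [mul_sub, sub_mul, mul_one, sUU hA, hM]
    rw [hexp] at hpsd
    have := diag_re_nonneg hpsd i
    have hd : ((1 - M) i i).re = 1 - (M i i).re := by
      simp [Matrix.sub_apply, Matrix.one_apply_eq]
    rw [hd] at this; linarith
  rcases le_or_gt 0 (hA.eigenvalues i) with hl | hl
  · rw [max_eq_left hl]
    exact mul_le_of_le_one_left hl h1
  · rw [max_eq_right hl.le]
    exact mul_nonpos_of_nonneg_of_nonpos h0 hl.le

lemma projNonneg_posSemidef {A : Matrix n n ℂ} (hA : A.IsHermitian) :
    (projNonneg A).PosSemidef := by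
  rw [projNonneg, dif_pos hA]
  rw [show star (hA.eigenvectorUnitary : Matrix n n ℂ)
      = (hA.eigenvectorUnitary : Matrix n n ℂ)ᴴ from rfl]
  refine (Matrix.posSemidef_diagonal_iff.mpr fun i => ?_).mul_mul_conjTranspose_same _
  split_ifs <;> simp

lemma one_sub_projNonneg_posSemidef {A : Matrix n n ℂ} (hA : A.IsHermitian) :
    ((1 : Matrix n n ℂ) - projNonneg A).PosSemidef := by
  rw [projNonneg, dif_pos hA]
  set U : Matrix n n ℂ := (hA.eigenvectorUnitary : Matrix n n ℂ) with hU
  have h1 : (1 : Matrix n n ℂ) - U * Matrix.diagonal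
        (fun i => if 0 ≤ hA.eigenvalues i then (1 : ℂ) else 0) * star U
      = U * Matrix.diagonal (fun i => if 0 ≤ hA.eigenvalues i then (0 : ℂ) else 1) * star U := by
    have : (1 : Matrix n n ℂ) = U * 1 * star U := by rw [mul_one, UsU hA]
    rw [this, ← sub_mul, ← mul_sub]
    congr 2
    rw [← Matrix.diagonal_one, Matrix.diagonal_sub]
    refine congrArg Matrix.diagonal (funext fun i => ?_)
    by_cases h : 0 ≤ hA.eigenvalues i <;> simp [h]
  rw [h1]
  rw [show star U = Uᴴ from rfl]
  refine (Matrix.posSemidef_diagonal_iff.mpr fun i => ?_).mul_mul_conjTranspose_same _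
  split_ifs <;> simp

/-- The projection achieves the positive part: `Re Tr(P A) = Tr A₊`. -/
lemma reTrace_projNonneg_mul {A : Matrix n n ℂ} (hA : A.IsHermitian) :
    ((projNonneg A * A).trace).re = trPos A := by
  rw [reTrace_mul_eq hA (projNonneg A), trPos_eq_sum hA]
  set U : Matrix n n ℂ := (hA.eigenvectorUnitary : Matrix n n ℂ) with hU
  have hC : star U * projNonneg A * U
      = Matrix.diagonal (fun i => if 0 ≤ hA.eigenvalues i then (1 : ℂ) else 0) := by
    rw [projNonneg, dif_pos hA, ← hU, ← mul_assoc, ← mul_assoc, sUU hA, one_mul,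
      mul_assoc, sUU hA, mul_one]
  rw [hC]
  refine Finset.sum_congr rfl fun i _ => ?_
  rw [Matrix.diagonal_apply_eq]
  rcases le_or_gt 0 (hA.eigenvalues i) with h | h
  · rw [if_pos h, max_eq_left h]; simp
  · rw [if_neg (not_le.mpr h), max_eq_right h.le]; simp

/-- If `-A` is PSD then `Tr A₊ ≤ 0` (in fact `= 0`). -/
lemma trPos_nonpos_of_neg_psd {A : Matrix n n ℂ} (h : (-A).PosSemidef) : trPos A ≤ 0 := by
  have hA : A.IsHermitian := by simpa using h.1.neg
  have h1 : ((projNonneg A * A).trace).re = -(((projNonneg A * -A).trace).re) := by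
    rw [mul_neg, trace_neg]; simp
  have h2 := reTrace_mul_nonneg (projNonneg_posSemidef hA) h
  rw [← reTrace_projNonneg_mul hA, h1]
  linarith

lemma reTrace_eq_sum {A : Matrix n n ℂ} (hA : A.IsHermitian) :
    (A.trace).re = ∑ i, hA.eigenvalues i := by
  have := reTrace_mul_eq hA 1
  rw [one_mul] at this
  rw [this]
  refine Finset.sum_congr rfl fun i _ => ?_
  rw [mul_one, sUU hA, Matrix.one_apply_eq]
  simp

lemma reTrace_le_trPos {A : Matrix n n ℂ} (hA : A.IsHermitian) : (A.trace).re ≤ trPos A := by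
  rw [reTrace_eq_sum hA, trPos_eq_sum hA]
  exact Finset.sum_le_sum fun i _ => le_max_left _ _


lemma isHermitian_smul_real (t : ℝ) {σ : Matrix n n ℂ} (h : σ.IsHermitian) :
    (t • σ).IsHermitian := by
  show (t • σ)ᴴ = t • σ
  rw [Matrix.conjTranspose_smul, star_trivial, h.eq]

lemma spectral' {A : Matrix n n ℂ} (hA : A.IsHermitian) :
    A = (hA.eigenvectorUnitary : Matrix n n ℂ) *
      Matrix.diagonal (fun i => ((hA.eigenvalues i : ℝ) : ℂ)) *
      star (hA.eigenvectorUnitary : Matrix n n ℂ) := by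
  conv_lhs => rw [hA.spectral_theorem]
  rfl

lemma smul_decomp {σ : Matrix n n ℂ} (hσ : σ.IsHermitian) (t : ℝ) :
    t • σ = (hσ.eigenvectorUnitary : Matrix n n ℂ) *
      Matrix.diagonal (fun i => ((t * hσ.eigenvalues i : ℝ) : ℂ)) *
      star (hσ.eigenvectorUnitary : Matrix n n ℂ) := by
  have hD : (t • Matrix.diagonal (fun i => ((hσ.eigenvalues i : ℝ) : ℂ)) : Matrix n n ℂ)
      = Matrix.diagonal (fun i => ((t * hσ.eigenvalues i : ℝ) : ℂ)) := by
    ext i j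
    by_cases h : i = j <;>
      simp [h, Matrix.smul_apply, Matrix.diagonal_apply, Complex.real_smul]
  rw [← hD, Matrix.mul_smul, Matrix.smul_mul, ← spectral' hσ]

lemma one_decomp {A : Matrix n n ℂ} (hA : A.IsHermitian) :
    (1 : Matrix n n ℂ) = (hA.eigenvectorUnitary : Matrix n n ℂ) *
      Matrix.diagonal (fun _ : n => ((1 : ℝ) : ℂ)) *
      star (hA.eigenvectorUnitary : Matrix n n ℂ) := by
  have : Matrix.diagonal (fun _ : n => ((1 : ℝ) : ℂ)) = 1 := by
    simp
  rw [this, mul_one, UsU hA]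

lemma conj_diag_sub {A : Matrix n n ℂ} (hA : A.IsHermitian) (f g : n → ℝ) :
    ((hA.eigenvectorUnitary : Matrix n n ℂ) * Matrix.diagonal (fun i => ((f i : ℝ) : ℂ)) *
      star (hA.eigenvectorUnitary : Matrix n n ℂ)) -
    ((hA.eigenvectorUnitary : Matrix n n ℂ) * Matrix.diagonal (fun i => ((g i : ℝ) : ℂ)) *
      star (hA.eigenvectorUnitary : Matrix n n ℂ)) =
    (hA.eigenvectorUnitary : Matrix n n ℂ) * Matrix.diagonal (fun i => ((f i - g i : ℝ) : ℂ)) *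
      star (hA.eigenvectorUnitary : Matrix n n ℂ) := by
  rw [← sub_mul, ← mul_sub, Matrix.diagonal_sub]
  congr 2
  funext i
  push_cast
  ring

lemma conj_diag_psd {A : Matrix n n ℂ} (hA : A.IsHermitian) (f : n → ℝ) (hf : ∀ i, 0 ≤ f i) :
    ((hA.eigenvectorUnitary : Matrix n n ℂ) * Matrix.diagonal (fun i => ((f i : ℝ) : ℂ)) *
      star (hA.eigenvectorUnitary : Matrix n n ℂ)).PosSemidef := by
  rw [show star (hA.eigenvectorUnitary : Matrix n n ℂ)
      = (hA.eigenvectorUnitary : Matrix n n ℂ)ᴴ from rfl]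
  exact (Matrix.posSemidef_diagonal_iff.mpr fun i =>
    Complex.zero_le_real.mpr (hf i)).mul_mul_conjTranspose_same _

/-- If `ρ` is PSD with real trace `1` then `1 - ρ` is PSD. -/
lemma one_sub_psd {ρ : Matrix n n ℂ} (hρ : ρ.PosSemidef) (htr : (ρ.trace).re = 1) :
    ((1 : Matrix n n ℂ) - ρ).PosSemidef := by
  have hsum : ∑ i, hρ.1.eigenvalues i = 1 := by rw [← reTrace_eq_sum hρ.1, htr]
  have hle : ∀ i, hρ.1.eigenvalues i ≤ 1 := by
    intro i
    rw [← hsum]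
    exact Finset.single_le_sum (fun j _ => hρ.eigenvalues_nonneg j) (Finset.mem_univ i)
  have key := conj_diag_sub hρ.1 (fun _ => 1) hρ.1.eigenvalues
  rw [← one_decomp hρ.1, ← spectral' hρ.1] at key
  rw [key]
  exact conj_diag_psd hρ.1 _ fun i => by linarith [hle i]

end DlowDHAux

open DlowDHAux

/-- Equivalence of `D̲_s^ε` with the hypothesis testing relative entropy:
`D_H^{ε−δ}(ρ‖σ) + log δ ≤ D̲_s^ε(ρ‖σ) ≤ D_H^ε(ρ‖σ)` for `0 < δ < ε < 1`. -/
theorem Dlow_DH_bounds {d : ℕ} (ρ σ : Matrix (Fin d) (Fin d) ℂ)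
    (hρ : ρ.PosSemidef) (hρtr : ρ.trace = 1) (hσ : σ.PosDef)
    (ε δ : ℝ) (hδ0 : 0 < δ) (hδε : δ < ε) (hε1 : ε < 1) :
    DH (ε - δ) ρ σ + Real.logb 2 δ ≤ Dlow ε ρ σ ∧ Dlow ε ρ σ ≤ DH ε ρ σ := by
  have hε0 : 0 < ε := hδ0.trans hδε
  have hne : Nonempty (Fin d) := by
    by_contra h
    rw [not_nonempty_iff] at h
    rw [Matrix.trace, Finset.univ_eq_empty, Finset.sum_empty] at hρtr
    exact zero_ne_one hρtr
  obtain ⟨i₀⟩ := hne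
  set m : ℝ := Finset.univ.inf' (Finset.univ_nonempty_iff.mpr ⟨i₀⟩) hσ.1.eigenvalues with hm
  have hm0 : 0 < m := by
    rw [hm, Finset.lt_inf'_iff]
    exact fun i _ => hσ.eigenvalues_pos i
  have hmle : ∀ i, m ≤ hσ.1.eigenvalues i := fun i => Finset.inf'_le _ (Finset.mem_univ i)
  have hρtrre : (ρ.trace).re = 1 := by rw [hρtr]; simp
  have hσpsd := hσ.posSemidef
  have hherm : ∀ t : ℝ, (ρ - t • σ).IsHermitian :=
    fun t => hρ.1.sub (isHermitian_smul_real t hσ.1)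
  have hlin : ∀ (Q : Matrix (Fin d) (Fin d) ℂ) (t : ℝ),
      ((Q * (ρ - t • σ)).trace).re = ((Q * ρ).trace).re - t * ((Q * σ).trace).re := by
    intro Q t
    rw [mul_sub, Matrix.mul_smul, trace_sub, trace_smul, Complex.sub_re, Complex.smul_re,
      smul_eq_mul]
  have h1mρ : ((1 : Matrix (Fin d) (Fin d) ℂ) - ρ).PosSemidef := one_sub_psd hρ hρtrre
  have key1 : ∀ Q : Matrix (Fin d) (Fin d) ℂ, Q.PosSemidef →
      ((Q * ρ).trace).re ≤ (Q.trace).re := by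
    intro Q hQ
    have h := reTrace_mul_nonneg hQ h1mρ
    rw [mul_sub, mul_one, trace_sub, Complex.sub_re] at h
    linarith
  have key1' : ∀ Q : Matrix (Fin d) (Fin d) ℂ, ((1 : Matrix (Fin d) (Fin d) ℂ) - Q).PosSemidef →
      ((Q * ρ).trace).re ≤ 1 := by
    intro Q hQ1
    have h := reTrace_mul_nonneg hQ1 hρ
    rw [sub_mul, one_mul, trace_sub, Complex.sub_re, hρtrre] at h
    linarith
  have key2 : ∀ (Q : Matrix (Fin d) (Fin d) ℂ) (c : ℝ), Q.PosSemidef →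
      c ≤ ((Q * ρ).trace).re → m * c ≤ ((Q * σ).trace).re := by
    intro Q c hQ hc
    rw [reTrace_mul_eq hσ.1 Q]
    set M := star (hσ.1.eigenvectorUnitary : Matrix (Fin d) (Fin d) ℂ) * Q *
      (hσ.1.eigenvectorUnitary : Matrix (Fin d) (Fin d) ℂ) with hMdef
    have hqnn : ∀ i, 0 ≤ (M i i).re := fun i => diag_re_nonneg (conj_psd hQ hσ.1) i
    have h1 : ∑ i, (M i i).re * m ≤ ∑ i, (M i i).re * hσ.1.eigenvalues i :=
      Finset.sum_le_sum fun i _ => mul_le_mul_of_nonneg_left (hmle i) (hqnn i)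
    have hMtr : M.trace = Q.trace := by
      rw [hMdef, trace_mul_cycle, UsU hσ.1, one_mul]
    have h2 : ∑ i, (M i i).re * m = m * (Q.trace).re := by
      rw [← Finset.sum_mul, mul_comm]
      congr 1
      rw [← hMtr, Matrix.trace, Complex.re_sum]
      rfl
    have h3 : c ≤ (Q.trace).re := hc.trans (key1 Q hQ)
    calc m * c ≤ m * (Q.trace).re := by nlinarith
      _ = ∑ i, (M i i).re * m := h2.symm
      _ ≤ _ := h1
  set F : ℝ → Set ℝ := fun ε' => {r : ℝ | ∃ Q : Matrix (Fin d) (Fin d) ℂ, Q.PosSemidef ∧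
      ((1 : Matrix (Fin d) (Fin d) ℂ) - Q).PosSemidef ∧ 1 - ε' ≤ (Q * ρ).trace.re ∧
      r = (Q * σ).trace.re} with hF
  have hDH : ∀ ε', DH ε' ρ σ = - Real.logb 2 (sInf (F ε')) := fun _ => rfl
  have hFne : ∀ ε', 0 ≤ ε' → (σ.trace).re ∈ F ε' := by
    intro ε' hε'
    refine ⟨1, Matrix.PosSemidef.one, by rw [sub_self]; exact Matrix.PosSemidef.zero,
      ?_, by rw [one_mul]⟩
    rw [one_mul, hρtrre]; linarith
  have hFlb : ∀ ε', ∀ r ∈ F ε', m * (1 - ε') ≤ r := by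
    rintro ε' r ⟨Q, hQ, hQ1, hfeas, rfl⟩
    exact key2 Q (1 - ε') hQ hfeas
  set S := {γ : ℝ | 1 - ε ≤ trPos (ρ - (2 : ℝ) ^ γ • σ)} with hS
  have hDlow : Dlow ε ρ σ = sSup S := rfl
  -- S is nonempty
  have hσtr0 : 0 ≤ (σ.trace).re := by
    rw [reTrace_eq_sum hσ.1]
    exact Finset.sum_nonneg fun i _ => (hσ.eigenvalues_pos i).le
  set γ₀ := Real.logb 2 (ε / ((σ.trace).re + 1)) with hγ₀def
  have ht0 : (2:ℝ) ^ γ₀ = ε / ((σ.trace).re + 1) :=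
    Real.rpow_logb (by norm_num) (by norm_num) (div_pos hε0 (by linarith))
  have hγ₀S : γ₀ ∈ S := by
    show 1 - ε ≤ trPos (ρ - (2:ℝ) ^ γ₀ • σ)
    have h1 : ((ρ - (2:ℝ) ^ γ₀ • σ).trace).re = 1 - (2:ℝ) ^ γ₀ * (σ.trace).re := by
      rw [trace_sub, trace_smul, Complex.sub_re, Complex.smul_re, smul_eq_mul, hρtrre]
    have h2 : (2:ℝ) ^ γ₀ * (σ.trace).re ≤ ε := by
      rw [ht0, div_mul_eq_mul_div, div_le_iff₀ (by linarith : (0:ℝ) < (σ.trace).re + 1)]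
      nlinarith
    calc 1 - ε ≤ ((ρ - (2:ℝ) ^ γ₀ • σ).trace).re := by rw [h1]; linarith
      _ ≤ trPos _ := reTrace_le_trPos (hherm _)
  -- S is bounded above
  have hB : BddAbove S := by
    refine ⟨Real.logb 2 (1/m), fun γ hγ => ?_⟩
    by_contra hcon
    push_neg at hcon
    have ht : (1:ℝ)/m < (2:ℝ) ^ γ := by
      calc (1:ℝ)/m = (2:ℝ) ^ Real.logb 2 (1/m) :=
            (Real.rpow_logb (by norm_num) (by norm_num) (by positivity)).symm
        _ < (2:ℝ) ^ γ := (Real.rpow_lt_rpow_left_iff one_lt_two).mpr hcon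
    have ht0' : (0:ℝ) < (2:ℝ) ^ γ := Real.rpow_pos_of_pos (by norm_num) γ
    have hts : (2:ℝ) ^ γ • σ - (1 : Matrix (Fin d) (Fin d) ℂ)
        = (hσ.1.eigenvectorUnitary : Matrix (Fin d) (Fin d) ℂ) *
          Matrix.diagonal (fun i => (((2:ℝ) ^ γ * hσ.1.eigenvalues i - 1 : ℝ) : ℂ)) *
          star (hσ.1.eigenvectorUnitary : Matrix (Fin d) (Fin d) ℂ) := by
      have key := conj_diag_sub hσ.1 (fun i => (2:ℝ) ^ γ * hσ.1.eigenvalues i) (fun _ => 1)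
      rw [← smul_decomp hσ.1 ((2:ℝ) ^ γ), ← one_decomp hσ.1] at key
      exact key
    have hts_psd : ((2:ℝ) ^ γ • σ - (1 : Matrix (Fin d) (Fin d) ℂ)).PosSemidef := by
      rw [hts]
      refine conj_diag_psd hσ.1 _ fun i => ?_
      have h1 : (1:ℝ) = 1/m * m := by field_simp
      nlinarith [hmle i, hm0]
    have hneg : (-(ρ - (2:ℝ) ^ γ • σ)).PosSemidef := by
      rw [neg_sub, ← sub_add_sub_cancel ((2:ℝ) ^ γ • σ) (1 : Matrix (Fin d) (Fin d) ℂ) ρ]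
      exact hts_psd.add h1mρ
    have hz := trPos_nonpos_of_neg_psd hneg
    have hγS : 1 - ε ≤ trPos (ρ - (2:ℝ) ^ γ • σ) := hγ
    linarith
  constructor
  · -- part 1
    rw [hDlow]
    by_contra hcon
    push_neg at hcon
    set c := DH (ε - δ) ρ σ + Real.logb 2 δ with hc
    set γ := (sSup S + c)/2 with hγdef
    have h1 : sSup S < γ := by rw [hγdef]; linarith
    have h2 : γ < c := by rw [hγdef]; linarith
    have hγnS : γ ∉ S := fun hmem => absurd (le_csSup hB hmem) (not_le.mpr h1)
    have htp : trPos (ρ - (2:ℝ) ^ γ • σ) < 1 - ε := not_le.mp hγnS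
    have ht0' : (0:ℝ) < (2:ℝ) ^ γ := Real.rpow_pos_of_pos (by norm_num) γ
    have hlb : ∀ r ∈ F (ε - δ), δ / (2:ℝ) ^ γ ≤ r := by
      rintro r ⟨Q, hQ, hQ1, hfeas, rfl⟩
      have hub := reTrace_mul_le_trPos hQ hQ1 (hherm ((2:ℝ) ^ γ))
      rw [hlin Q ((2:ℝ) ^ γ)] at hub
      rw [div_le_iff₀ ht0']
      nlinarith
    have hsinf : δ / (2:ℝ) ^ γ ≤ sInf (F (ε - δ)) :=
      le_csInf ⟨_, hFne (ε - δ) (by linarith)⟩ hlb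
    have hpos' : 0 < δ / (2:ℝ) ^ γ := div_pos hδ0 ht0'
    have hmono : Real.logb 2 (δ / (2:ℝ) ^ γ) ≤ Real.logb 2 (sInf (F (ε - δ))) :=
      Real.logb_le_logb_of_le one_lt_two hpos' hsinf
    have heq : Real.logb 2 (δ / (2:ℝ) ^ γ) = Real.logb 2 δ - γ := by
      rw [Real.logb_div (ne_of_gt hδ0) (ne_of_gt ht0'),
        Real.logb_rpow (by norm_num) (by norm_num)]
    have hDHle : DH (ε - δ) ρ σ ≤ γ - Real.logb 2 δ := by
      rw [hDH (ε - δ)]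
      linarith
    have : c ≤ γ := by rw [hc]; linarith
    linarith
  · -- part 2
    rw [hDlow, hDH ε]
    refine csSup_le ⟨γ₀, hγ₀S⟩ fun γ hγ => ?_
    have ht0' : (0:ℝ) < (2:ℝ) ^ γ := Real.rpow_pos_of_pos (by norm_num) γ
    have hPpsd := projNonneg_posSemidef (hherm ((2:ℝ) ^ γ))
    have hP1psd := one_sub_projNonneg_posSemidef (hherm ((2:ℝ) ^ γ))
    have hPe : ((projNonneg (ρ - (2:ℝ) ^ γ • σ) * (ρ - (2:ℝ) ^ γ • σ)).trace).re
        = trPos (ρ - (2:ℝ) ^ γ • σ) := reTrace_projNonneg_mul (hherm ((2:ℝ) ^ γ))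
    rw [hlin _ ((2:ℝ) ^ γ)] at hPe
    have hγ' : 1 - ε ≤ trPos (ρ - (2:ℝ) ^ γ • σ) := hγ
    have hPσ0 : 0 ≤ ((projNonneg (ρ - (2:ℝ) ^ γ • σ) * σ).trace).re :=
      reTrace_mul_nonneg hPpsd hσpsd
    have hPρ1 : ((projNonneg (ρ - (2:ℝ) ^ γ • σ) * ρ).trace).re ≤ 1 := key1' _ hP1psd
    have hfeas : 1 - ε ≤ ((projNonneg (ρ - (2:ℝ) ^ γ • σ) * ρ).trace).re := by nlinarith
    have hrF : ((projNonneg (ρ - (2:ℝ) ^ γ • σ) * σ).trace).re ∈ F ε :=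
      ⟨projNonneg (ρ - (2:ℝ) ^ γ • σ), hPpsd, hP1psd, hfeas, rfl⟩
    have hrle : ((projNonneg (ρ - (2:ℝ) ^ γ • σ) * σ).trace).re ≤ ε / (2:ℝ) ^ γ := by
      rw [le_div_iff₀ ht0']
      nlinarith
    have hbdd : BddBelow (F ε) := ⟨m * (1 - ε), fun r hr => hFlb ε r hr⟩
    have hsInfpos : 0 < sInf (F ε) :=
      lt_of_lt_of_le (by nlinarith) (le_csInf ⟨_, hrF⟩ (hFlb ε))
    have hsle : sInf (F ε) ≤ ε / (2:ℝ) ^ γ := (csInf_le hbdd hrF).trans hrle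
    have hlogb : Real.logb 2 (sInf (F ε)) ≤ Real.logb 2 ε - γ := by
      calc Real.logb 2 (sInf (F ε)) ≤ Real.logb 2 (ε / (2:ℝ) ^ γ) :=
            Real.logb_le_logb_of_le one_lt_two hsInfpos hsle
        _ = Real.logb 2 ε - Real.logb 2 ((2:ℝ) ^ γ) :=
            Real.logb_div (ne_of_gt hε0) (ne_of_gt ht0')
        _ = Real.logb 2 ε - γ := by rw [Real.logb_rpow (by norm_num) (by norm_num)]
    have hεle : Real.logb 2 ε ≤ 0 := Real.logb_nonpos one_lt_two hε0.le hε1.le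
    linarith
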